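/- For the difference basis norm on finitely supported real sequences, ‖(a_n)‖ = Σ_{n=1}^{N−1} |a_n − a_{n+1}| + |a_N| (where N is beyond the support), the restricted left democracy function satisfies: h_{R,l}(m,u) = 2m if u ≥ 2m, and h_{R,l}(m,u) = 2u − 2m + 1 if m ≤ u < 2m, where h_{R,l}(m,u) is the supremum of ‖1_A‖ over sets A ⊂ {1,…,u} with |A| = m. -/

import Mathlib

/-- The difference-basis norm on finitely supported sequences (indexed from 1):
‖(a_n)‖ = Σ_{n≥1} |a_n − a_{n+1}|. -/
noncomputable def dNorm (a : ℕ → ℝ) : ℝ := ∑' n : ℕ, |a (n + 1) - a (n + 2)|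

/-- h_{R,l}(m,u): sup of ‖1_A‖ over A ⊆ {1,…,u} with |A| = m. -/
noncomputable def hRl (m u : ℕ) : ℝ :=
  sSup {x : ℝ | ∃ A : Finset ℕ, A.card = m ∧ (∀ n ∈ A, 1 ≤ n ∧ n ≤ u) ∧
    x = dNorm (fun n => if n ∈ A then (1 : ℝ) else 0)}

open Finset

lemma dNorm_eq (A : Finset ℕ) (N : ℕ) (hN : ∀ a ∈ A, a ≤ N) :
    dNorm (fun n => if n ∈ A then (1:ℝ) else 0) =
    ((Finset.range N).filter (fun n => ¬((n+1 ∈ A) ↔ (n+2 ∈ A)))).card := by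
  unfold dNorm
  rw [tsum_eq_sum (s := Finset.range N) (by
    intro n hn
    simp only [Finset.mem_range, not_lt] at hn
    have h1 : n+1 ∉ A := fun h => by have := hN _ h; omega
    have h2 : n+2 ∉ A := fun h => by have := hN _ h; omega
    simp [h1, h2])]
  rw [Finset.sum_congr rfl (g := fun n => if ¬((n+1 ∈ A) ↔ (n+2 ∈ A)) then (1:ℝ) else 0)
    (by intro n _; by_cases h1 : n+1 ∈ A <;> by_cases h2 : n+2 ∈ A <;> simp [h1, h2])]
  rw [Finset.sum_boole]

/-- The extremal set: a block {1,…,c} followed by g isolated points c+2, c+4, …, c+2g. -/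
def dnWitness (c g : ℕ) : Finset ℕ :=
  Finset.Icc 1 c ∪ (Finset.range g).image (fun j => c + 2*j + 2)

lemma mem_dnWitness (c g k : ℕ) :
    k ∈ dnWitness c g ↔ 1 ≤ k ∧ k ≤ c + 2*g ∧ (k ≤ c ∨ (k - c) % 2 = 0) := by
  simp only [dnWitness, Finset.mem_union, Finset.mem_Icc, Finset.mem_image, Finset.mem_range]
  constructor
  · rintro (⟨h1, h2⟩ | ⟨j, hj, rfl⟩) <;> omega
  · rintro ⟨h1, h2, h3⟩
    by_cases hc : k ≤ c
    · exact Or.inl ⟨h1, hc⟩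
    · exact Or.inr ⟨(k - c)/2 - 1, by omega, by omega⟩

lemma card_dnWitness (c g : ℕ) : (dnWitness c g).card = c + g := by
  rw [dnWitness, Finset.card_union_of_disjoint, Nat.card_Icc,
    Finset.card_image_of_injective _ (fun a b h => by omega), Finset.card_range]
  · omega
  · rw [Finset.disjoint_left]
    intro a ha hb
    rw [Finset.mem_Icc] at ha
    simp only [Finset.mem_image, Finset.mem_range] at hb
    obtain ⟨j, _, rfl⟩ := hb
    omega

lemma dnWitness_T (c g : ℕ) (h : 1 ≤ c + g) :
    ((Finset.range (c+2*g+1)).filter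
      (fun n => ¬((n+1 ∈ dnWitness c g) ↔ (n+2 ∈ dnWitness c g)))).card
      = c + 2*g + 1 - c + (min c 1) - 1 := by
  have hT : ((Finset.range (c+2*g+1)).filter
      (fun n => ¬((n+1 ∈ dnWitness c g) ↔ (n+2 ∈ dnWitness c g))))
      = Finset.Icc (c-1) (c+2*g-1) := by
    ext n
    simp only [Finset.mem_filter, Finset.mem_range, Finset.mem_Icc, mem_dnWitness]
    omega
  rw [hT, Nat.card_Icc]
  omega

lemma card_T_le (A : Finset ℕ) (u : ℕ) (hA : ∀ n ∈ A, 1 ≤ n ∧ n ≤ u) :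
    (((Finset.range (u+1)).filter (fun n => ¬((n+1 ∈ A) ↔ (n+2 ∈ A)))).card ≤ 2 * A.card)
    ∧ ((Finset.range (u+1)).filter (fun n => ¬((n+1 ∈ A) ↔ (n+2 ∈ A)))).card + 2 * A.card
        ≤ 2 * u + 1 := by
  set T := (Finset.range (u+1)).filter (fun n => ¬((n+1 ∈ A) ↔ (n+2 ∈ A))) with hTdef
  have hsub : A ⊆ Finset.Icc 1 u := by
    intro a ha; rw [Finset.mem_Icc]; exact hA a ha
  have hAu : A.card ≤ u := by
    calc A.card ≤ (Finset.Icc 1 u).card := Finset.card_le_card hsub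
    _ = u := by rw [Nat.card_Icc]; omega
  have hsplit : (T.filter (fun n => n+2 ∈ A)).card + (T.filter (fun n => n+1 ∈ A)).card
      = T.card := by
    rw [show T.filter (fun n => n+1 ∈ A) = T.filter (fun n => ¬(n+2 ∈ A)) from ?_]
    · exact Finset.card_filter_add_card_filter_not _
    · apply Finset.filter_congr
      intro n hn
      rw [hTdef, Finset.mem_filter] at hn
      tauto
  have hup1 : (T.filter (fun n => n+2 ∈ A)).card ≤ A.card := by
    apply Finset.card_le_card_of_injOn (fun n => n+2)
    · intro n hn
      exact (Finset.mem_filter.mp hn).2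
    · intro a _ b _ h; simpa using h
  have hdn1 : (T.filter (fun n => n+1 ∈ A)).card ≤ A.card := by
    apply Finset.card_le_card_of_injOn (fun n => n+1)
    · intro n hn
      exact (Finset.mem_filter.mp hn).2
    · intro a _ b _ h; simpa using h
  have hup2 : (T.filter (fun n => n+2 ∈ A)).card ≤ u - A.card := by
    have : (T.filter (fun n => n+2 ∈ A)).card ≤ (Finset.Icc 1 u \ A).card := by
      apply Finset.card_le_card_of_injOn (fun n => n+1)
      · intro n hn
        rw [Finset.mem_coe, Finset.mem_filter, hTdef, Finset.mem_filter] at hn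
        obtain ⟨⟨_, hne⟩, h2⟩ := hn
        have h1 : n+1 ∉ A := fun h => hne (iff_of_true h h2)
        rw [Finset.mem_coe, Finset.mem_sdiff, Finset.mem_Icc]
        beta_reduce
        have := hA _ h2
        exact ⟨⟨by omega, by omega⟩, h1⟩
      · intro a _ b _ h; simpa using h
    rw [Finset.card_sdiff_of_subset hsub, Nat.card_Icc] at this
    omega
  have hdn2 : (T.filter (fun n => n+1 ∈ A)).card ≤ u + 1 - A.card := by
    have hsub' : A ⊆ Finset.Icc 1 (u+1) := by
      intro a ha; rw [Finset.mem_Icc]; have := hA a ha; omega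
    have : (T.filter (fun n => n+1 ∈ A)).card ≤ (Finset.Icc 1 (u+1) \ A).card := by
      apply Finset.card_le_card_of_injOn (fun n => n+2)
      · intro n hn
        rw [Finset.mem_coe, Finset.mem_filter, hTdef, Finset.mem_filter] at hn
        obtain ⟨⟨_, hne⟩, h1⟩ := hn
        have h2 : n+2 ∉ A := fun h => hne (iff_of_true h1 h)
        rw [Finset.mem_coe, Finset.mem_sdiff, Finset.mem_Icc]
        beta_reduce
        have := hA _ h1
        exact ⟨⟨by omega, by omega⟩, h2⟩
      · intro a _ b _ h; simpa using h
    rw [Finset.card_sdiff_of_subset hsub', Nat.card_Icc] at this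
    omega
  omega

/-- for the difference basis of ℓ₁,
h_{R,l}(m,u) = 2m if u ≥ 2m, and h_{R,l}(m,u) = 2u − 2m + 1 if m ≤ u < 2m. -/
theorem stmt14 (m u : ℕ) (hm : 1 ≤ m) (hmu : m ≤ u) :
    (2 * m ≤ u → hRl m u = 2 * (m : ℝ)) ∧
      (u < 2 * m → hRl m u = 2 * (u : ℝ) - 2 * (m : ℝ) + 1) := by
  constructor
  · intro h2m
    apply IsGreatest.csSup_eq
    constructor
    · refine ⟨dnWitness 0 m, by rw [card_dnWitness]; omega, ?_, ?_⟩
      · intro n hn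
        rw [mem_dnWitness] at hn
        omega
      · rw [dNorm_eq (dnWitness 0 m) (0 + 2*m + 1)
          (fun a ha => by rw [mem_dnWitness] at ha; omega)]
        rw [dnWitness_T 0 m (by omega)]
        norm_cast
        omega
    · rintro x ⟨A, hcard, hA, rfl⟩
      rw [dNorm_eq A (u+1) (fun a ha => by have := hA a ha; omega)]
      have h := (card_T_le A u hA).1
      rw [hcard] at h
      exact_mod_cast h
  · intro hu2m
    apply IsGreatest.csSup_eq
    constructor
    · refine ⟨dnWitness (2*m - u) (u - m), ?_, ?_, ?_⟩
      · rw [card_dnWitness]; omega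
      · intro n hn
        rw [mem_dnWitness] at hn
        omega
      · rw [dNorm_eq (dnWitness (2*m - u) (u - m)) ((2*m - u) + 2*(u - m) + 1)
          (fun a ha => by rw [mem_dnWitness] at ha; omega)]
        rw [dnWitness_T (2*m - u) (u - m) (by omega)]
        have : (2*m - u) + 2*(u - m) + 1 - (2*m - u) + (min (2*m - u) 1) - 1
            = 2*(u - m) + 1 := by omega
        rw [this]
        have hcast : ((2*(u - m) + 1 : ℕ) : ℝ) = 2 * (u : ℝ) - 2 * (m : ℝ) + 1 := by
          have : ((u - m : ℕ) : ℝ) = (u : ℝ) - (m : ℝ) := by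
            exact Nat.cast_sub hmu
          push_cast [this]
          ring
        rw [hcast]
    · rintro x ⟨A, hcard, hA, rfl⟩
      rw [dNorm_eq A (u+1) (fun a ha => by have := hA a ha; omega)]
      have h := (card_T_le A u hA).2
      rw [hcard] at h
      have h' : (((Finset.range (u+1)).filter
          (fun n => ¬((n+1 ∈ A) ↔ (n+2 ∈ A)))).card : ℝ) + 2 * m ≤ 2 * u + 1 := by
        exact_mod_cast h
      linarith
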